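/- arXiv:2108.05820 — 2 statements merged into one kernel-verified Lean document; each statement's English description precedes it below -/
import Mathlib

section
/- The permutation digraph P(d,k) is k-geodetic: for any ordered pair of vertices (u,v) there is at most one directed path of length at most k from u to v. -/
/-- A vertex of the permutation digraph `P(d,k)`: a sequence of `k` pairwise
distinct symbols from the alphabet `{0,…,d+k-1}`. -/
def PermDigraphVertex (d k : ℕ) := {x : Fin k → Fin (d + k) // Function.Injective x}

/-- There is an arc from `x₀x₁…x_{k-1}` to `x₁…x_{k-1}x_k` whenever `x_k`
differs from all of `x₀,…,x_{k-1}`. -/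
def PermDigraphAdj (d k : ℕ) (u v : PermDigraphVertex d k) : Prop :=
  (∀ i j : Fin k, (j : ℕ) = (i : ℕ) + 1 → v.1 i = u.1 j) ∧
  (∀ i j : Fin k, (i : ℕ) = k - 1 → v.1 i ≠ u.1 j)

/-- A directed path (walk) of length at most `n` from `u` to `v` in `P(d,k)`,
recorded as the list of its vertices (so it has at most `n+1` vertices). -/
def PermDigraphWalkUpTo (d k n : ℕ) (u v : PermDigraphVertex d k)
    (l : List (PermDigraphVertex d k)) : Prop :=
  l.head? = some u ∧ l.getLast? = some v ∧ l.Chain' (PermDigraphAdj d k) ∧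
  l.length ≤ n + 1

namespace PermDigraphAux

variable {d k : ℕ}

lemma shift_one {l : List (PermDigraphVertex d k)} (hc : l.Chain' (PermDigraphAdj d k))
    {p : ℕ} (hp : p + 1 < l.length) (i j : Fin k) (hij : (j : ℕ) = (i : ℕ) + 1) :
    (l.get ⟨p + 1, hp⟩).1 i = (l.get ⟨p, by omega⟩).1 j := by
  have h := (List.isChain_iff_getElem.1 hc p (by omega)).1 i j hij
  exact h

lemma shift {l : List (PermDigraphVertex d k)} (hc : l.Chain' (PermDigraphAdj d k))
    {p q : ℕ} (hpq : p ≤ q) (hq : q < l.length) (i j : Fin k)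
    (hij : (j : ℕ) = (i : ℕ) + (q - p)) :
    (l.get ⟨q, hq⟩).1 i = (l.get ⟨p, by omega⟩).1 j := by
  induction q, hpq using Nat.le_induction generalizing i with
  | base =>
    have : j = i := Fin.ext (by omega)
    subst this; rfl
  | succ q' hq' ih =>
    have hi1 : (i : ℕ) + 1 < k := by
      have := j.2; omega
    have h1 : (l.get ⟨q' + 1, hq⟩).1 i = (l.get ⟨q', by omega⟩).1 ⟨(i : ℕ) + 1, hi1⟩ :=
      shift_one hc hq i ⟨(i : ℕ) + 1, hi1⟩ rfl
    rw [h1]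
    exact ih (by omega) ⟨(i : ℕ) + 1, hi1⟩ (by simp; omega)

lemma newsym {l : List (PermDigraphVertex d k)} (hc : l.Chain' (PermDigraphAdj d k))
    {p : ℕ} (hp : p + 1 < l.length) (i j : Fin k) (hi : (i : ℕ) = k - 1) :
    (l.get ⟨p + 1, hp⟩).1 i ≠ (l.get ⟨p, by omega⟩).1 j :=
  (List.isChain_iff_getElem.1 hc p (by omega)).2 i j hi

lemma walk_parts {u v : PermDigraphVertex d k} {l : List (PermDigraphVertex d k)}
    (hw : PermDigraphWalkUpTo d k k u v l) :
    ∃ h0 : 0 < l.length, l.get ⟨0, h0⟩ = u ∧ l.get ⟨l.length - 1, by omega⟩ = v ∧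
      l.Chain' (PermDigraphAdj d k) ∧ l.length ≤ k + 1 := by
  obtain ⟨h1, h2, h3, h4⟩ := hw
  have hne : l ≠ [] := by rintro rfl; simp at h1
  have h0 : 0 < l.length := List.length_pos_iff.2 hne
  refine ⟨h0, ?_, ?_, h3, h4⟩
  · have := List.head?_eq_head hne
    rw [this] at h1
    have := Option.some_injective _ h1
    rw [← this]
    cases l with
    | nil => exact absurd rfl hne
    | cons a t => rfl
  · have := List.getLast?_eq_getLast hne
    rw [this] at h2
    have := Option.some_injective _ h2
    rw [← this, List.getLast_eq_getElem, List.get_eq_getElem]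

/-- Every vertex of a walk of length ≤ k is determined by the endpoints,
its position, and the walk's length. -/
lemma walk_get {u v : PermDigraphVertex d k} {l : List (PermDigraphVertex d k)}
    (hw : PermDigraphWalkUpTo d k k u v l) (p : ℕ) (hp : p < l.length) (i : Fin k) :
    (l.get ⟨p, hp⟩).1 i =
      if h : (i : ℕ) + p < k then u.1 ⟨(i : ℕ) + p, h⟩
      else v.1 ⟨(i : ℕ) + p - (l.length - 1), by have := i.2; omega⟩ := by
  obtain ⟨h0, hu, hv, hc, hlen⟩ := walk_parts hw
  split
  · next h =>
    rw [← hu]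
    exact shift hc (Nat.zero_le p) hp i ⟨(i : ℕ) + p, h⟩ (by simp)
  · next h =>
    rw [← hv]
    have := i.2
    exact (shift hc (by omega) (by omega) ⟨(i : ℕ) + p - (l.length - 1), by omega⟩ i
      (by simp; omega)).symm

lemma walk_length_le {u v : PermDigraphVertex d k} {l₁ l₂ : List (PermDigraphVertex d k)}
    (hk : 2 ≤ k)
    (hw₁ : PermDigraphWalkUpTo d k k u v l₁) (hw₂ : PermDigraphWalkUpTo d k k u v l₂) :
    l₁.length ≤ l₂.length := by
  by_contra hlt
  push_neg at hlt
  obtain ⟨h0₂, hu₂, hv₂, hc₂, hlen₂⟩ := walk_parts hw₂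
  obtain ⟨h0₁, hu₁, hv₁, hc₁, hlen₁⟩ := walk_parts hw₁
  set m := l₂.length - 1 with hm
  set n := l₁.length - 1 with hn
  have hmn : m < n := by omega
  have hnk : n ≤ k := by omega
  have hkpos : 0 < k := by omega
  -- from walk₂ : v 0 = u m
  have hvm : v.1 ⟨0, hkpos⟩ = u.1 ⟨m, by omega⟩ := by
    rw [← hv₂, ← hu₂]
    exact shift hc₂ (Nat.zero_le m) (by omega) ⟨0, hkpos⟩ ⟨m, by omega⟩ (by simp)
  by_cases hnlt : n < k
  · -- from walk₁ : v 0 = u n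
    have hvn : v.1 ⟨0, hkpos⟩ = u.1 ⟨n, hnlt⟩ := by
      rw [← hv₁, ← hu₁]
      exact shift hc₁ (Nat.zero_le n) (by omega) ⟨0, hkpos⟩ ⟨n, hnlt⟩ (by simp)
    have heq : u.1 ⟨n, hnlt⟩ = u.1 ⟨m, by omega⟩ := hvn.symm.trans hvm
    have : n = m := congrArg Fin.val (u.2 heq)
    omega
  · -- n = k : v 0 is the symbol appended at the first step of walk₁
    have hnk' : n = k := by omega
    have h0₁' : 0 + 1 < l₁.length := by omega
    have hv0 : v.1 ⟨0, hkpos⟩ = (l₁.get ⟨1, by omega⟩).1 ⟨k - 1, by omega⟩ := by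
      rw [← hv₁]
      exact shift (p := 1) (q := n) hc₁ (by omega) (by omega) ⟨0, hkpos⟩ ⟨k - 1, by omega⟩
        (by simp; omega)
    have hne := newsym hc₁ (p := 0) h0₁' ⟨k - 1, by omega⟩ ⟨m, by omega⟩ (by simp)
    have hgu : (l₁.get ⟨0, h0₁⟩).1 ⟨m, by omega⟩ = u.1 ⟨m, by omega⟩ :=
      congrArg (fun w : PermDigraphVertex d k => w.1 ⟨m, by omega⟩) hu₁
    exact hne (hv0.symm.trans (hvm.trans hgu.symm))

end PermDigraphAux

/-- P(d,k) is k-geodetic: for any ordered pair of vertices `(u,v)` there is at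
most one directed path of length at most `k` from `u` to `v`. -/
theorem permDigraph_kGeodetic (d k : ℕ) (hd : 2 ≤ d) (hk : 2 ≤ k) :
    ∀ (u v : PermDigraphVertex d k) (l₁ l₂ : List (PermDigraphVertex d k)),
      PermDigraphWalkUpTo d k k u v l₁ → PermDigraphWalkUpTo d k k u v l₂ →
      l₁ = l₂ := by
  intro u v l₁ l₂ h₁ h₂
  have hlen : l₁.length = l₂.length :=
    le_antisymm (PermDigraphAux.walk_length_le hk h₁ h₂)
      (PermDigraphAux.walk_length_le hk h₂ h₁)
  apply List.ext_get hlen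
  intro p hp₁ hp₂
  apply Subtype.ext
  funext i
  rw [PermDigraphAux.walk_get h₁ p hp₁ i, PermDigraphAux.walk_get h₂ p hp₂ i]
  simp [hlen]
end

section
/- The permutation digraph P(d,k) contains a directed cycle of length k+1, and hence its geodetic girth is exactly k. -/
/-- `m`-geodecity of P(d,k): at most one directed path of length ≤ m between
any ordered pair of vertices. -/
def PermDigraphGeodetic (d k m : ℕ) : Prop :=
  ∀ (u v : PermDigraphVertex d k) (l₁ l₂ : List (PermDigraphVertex d k)),
    PermDigraphWalkUpTo d k m u v l₁ → PermDigraphWalkUpTo d k m u v l₂ → l₁ = l₂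

/-- Shift lemma: along a chain, entries shift left. -/
lemma permShift {d k : ℕ} (l : List (PermDigraphVertex d k))
    (hc : l.Chain' (PermDigraphAdj d k)) :
    ∀ (c a : ℕ) (hb : a + c < l.length) (i j : Fin k), (j : ℕ) = (i : ℕ) + c →
      (l.get ⟨a + c, hb⟩).1 i = (l.get ⟨a, by omega⟩).1 j := by
  intro c
  induction c with
  | zero =>
      intro a hb i j hij
      have : i = j := Fin.ext (by omega)
      subst this
      rfl
  | succ c ih =>
      intro a hb i j hij
      have hj := j.2
      have hi1 : (i : ℕ) + 1 < k := by omega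
      have hadj := List.isChain_iff_getElem.mp hc (a + c) (by omega)
      have step : (l.get ⟨a + c + 1, by omega⟩).1 i
          = (l.get ⟨a + c, by omega⟩).1 ⟨(i : ℕ) + 1, hi1⟩ :=
        hadj.1 i ⟨(i : ℕ) + 1, hi1⟩ rfl
      have heq : (l.get ⟨a + (c + 1), hb⟩).1 i
          = (l.get ⟨a + c + 1, by omega⟩).1 i := by congr 1
      rw [heq, step]
      exact ih a (by omega) ⟨(i : ℕ) + 1, hi1⟩ j (by simp; omega)

/-- The last vertex of a short walk starts with a symbol of the first vertex. -/
lemma permWalk_first_eq {d k : ℕ} (hk0 : 0 < k) (l : List (PermDigraphVertex d k))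
    (hc : l.Chain' (PermDigraphAdj d k)) (hne : l ≠ []) (hlen : l.length - 1 < k) :
    (l.getLast hne).1 ⟨0, hk0⟩ = (l.head hne).1 ⟨l.length - 1, hlen⟩ := by
  have hlpos : 0 < l.length := List.length_pos_iff.mpr hne
  have h := permShift l hc (l.length - 1) 0 (by omega) ⟨0, hk0⟩ ⟨l.length - 1, hlen⟩ (by simp)
  have h1 : l.getLast hne = l.get ⟨0 + (l.length - 1), by omega⟩ := by
    rw [List.getLast_eq_getElem]
    simp only [List.get_eq_getElem]
    congr 1
    omega
  have h2 : l.head hne = l.get ⟨0, by omega⟩ := by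
    rw [List.head_eq_getElem_zero hne]
    simp [List.get_eq_getElem]
  rw [h1, h2]
  exact h

/-- The last vertex of a length-`k` walk starts with a fresh symbol. -/
lemma permWalk_first_ne {d k : ℕ} (hk0 : 0 < k) (l : List (PermDigraphVertex d k))
    (hc : l.Chain' (PermDigraphAdj d k)) (hne : l ≠ []) (hlen : l.length = k + 1)
    (j : Fin k) : (l.getLast hne).1 ⟨0, hk0⟩ ≠ (l.head hne).1 j := by
  have h := permShift l hc (k - 1) 1 (by omega) ⟨0, hk0⟩ ⟨k - 1, by omega⟩ (by simp)
  have h1 : l.getLast hne = l.get ⟨1 + (k - 1), by omega⟩ := by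
    rw [List.getLast_eq_getElem]
    simp only [List.get_eq_getElem]
    congr 1
    omega
  rw [h1, h]
  have hadj := List.isChain_iff_getElem.mp hc 0 (by omega)
  have h2 : l.head hne = l.get ⟨0, by omega⟩ := by
    rw [List.head_eq_getElem_zero hne]
    simp [List.get_eq_getElem]
  rw [h2]
  exact hadj.2 ⟨k - 1, by omega⟩ j rfl

/-- Two walks of length ≤ k between the same pair have the same length. -/
lemma permWalk_length_lt_false {d k : ℕ} (hk0 : 0 < k) (u v : PermDigraphVertex d k)
    (l₁ l₂ : List (PermDigraphVertex d k))
    (h₁ : PermDigraphWalkUpTo d k k u v l₁) (h₂ : PermDigraphWalkUpTo d k k u v l₂)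
    (hlt : l₁.length < l₂.length) : False := by
  obtain ⟨hh₁, hl₁, hc₁, hn₁⟩ := h₁
  obtain ⟨hh₂, hl₂, hc₂, hn₂⟩ := h₂
  have hne₁ : l₁ ≠ [] := by intro h; subst h; simp at hh₁
  have hne₂ : l₂ ≠ [] := by intro h; subst h; simp at hh₂
  have hp₁ : 0 < l₁.length := List.length_pos_iff.mpr hne₁
  have hu₁ : l₁.head hne₁ = u := by rw [List.head?_eq_head hne₁] at hh₁; exact Option.some.inj hh₁
  have hv₁ : l₁.getLast hne₁ = v := by
    rw [List.getLast?_eq_getLast_of_ne_nil hne₁] at hl₁; exact Option.some.inj hl₁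
  have hu₂ : l₂.head hne₂ = u := by rw [List.head?_eq_head hne₂] at hh₂; exact Option.some.inj hh₂
  have hv₂ : l₂.getLast hne₂ = v := by
    rw [List.getLast?_eq_getLast_of_ne_nil hne₂] at hl₂; exact Option.some.inj hl₂
  have ht₁ : l₁.length - 1 < k := by omega
  have e₁ : v.1 ⟨0, hk0⟩ = u.1 ⟨l₁.length - 1, ht₁⟩ := by
    rw [← hu₁, ← hv₁]; exact permWalk_first_eq hk0 l₁ hc₁ hne₁ ht₁
  by_cases hcase : l₂.length = k + 1
  · have := permWalk_first_ne hk0 l₂ hc₂ hne₂ hcase ⟨l₁.length - 1, ht₁⟩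
    rw [hu₂, hv₂] at this
    exact this e₁
  · have ht₂ : l₂.length - 1 < k := by omega
    have e₂ : v.1 ⟨0, hk0⟩ = u.1 ⟨l₂.length - 1, ht₂⟩ := by
      rw [← hu₂, ← hv₂]; exact permWalk_first_eq hk0 l₂ hc₂ hne₂ ht₂
    have := u.2 (e₁ ▸ e₂)
    rw [Fin.mk.injEq] at this
    omega

/-- Each vertex along a short walk is determined by the endpoints. -/
lemma permWalk_determined {d k : ℕ} (u v : PermDigraphVertex d k)
    (l : List (PermDigraphVertex d k)) (hc : l.Chain' (PermDigraphAdj d k))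
    (hne : l ≠ []) (hu : l.head hne = u) (hv : l.getLast hne = v)
    (hlen : l.length ≤ k + 1) (s : ℕ) (hs : s < l.length) (i : Fin k) :
    (l.get ⟨s, hs⟩).1 i =
      if h : (i : ℕ) + s < k then u.1 ⟨(i : ℕ) + s, h⟩
      else v.1 ⟨(i : ℕ) - (l.length - 1 - s), by omega⟩ := by
  have hp : 0 < l.length := List.length_pos_iff.mpr hne
  split_ifs with h
  · have := permShift l hc s 0 (by omega) i ⟨(i : ℕ) + s, h⟩ rfl
    have h2 : (⟨0 + s, by omega⟩ : Fin l.length) = ⟨s, hs⟩ := Fin.ext (by simp)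
    rw [h2] at this
    rw [this, ← hu, List.head_eq_getElem_zero hne]
    simp [List.get_eq_getElem]
  · -- use the backward direction: position l.length-1 relates to position s
    set t := l.length - 1 with htdef
    have hik : (i : ℕ) - (t - s) < k := by omega
    have := permShift l hc (t - s) s (by omega) ⟨(i : ℕ) - (t - s), hik⟩ i (by simp; omega)
    have h1 : l.get ⟨s + (t - s), by omega⟩ = v := by
      rw [← hv, List.getLast_eq_getElem]
      simp only [List.get_eq_getElem]
      congr 1
      omega
    rw [h1] at this
    rw [← this]

/-- The vertices of the canonical (k+1)-cycle. -/
def permCycVert (d k t : ℕ) (hd : 1 ≤ d) (hk : 1 ≤ k) : PermDigraphVertex d k :=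
  ⟨fun i => ⟨(t + i) % (k + 1), by
      have := Nat.mod_lt (t + (i : ℕ)) (show 0 < k + 1 by omega); omega⟩, by
    intro i j hij
    have h : (t + (i : ℕ)) % (k + 1) = (t + (j : ℕ)) % (k + 1) := congrArg Fin.val hij
    have h2 : (i : ℕ) % (k + 1) = (j : ℕ) % (k + 1) :=
      Nat.ModEq.add_left_cancel' t h
    have hi := i.2
    have hj := j.2
    rw [Nat.mod_eq_of_lt (by omega), Nat.mod_eq_of_lt (by omega)] at h2
    exact Fin.ext h2⟩

lemma permCycAdj (d k t : ℕ) (hd : 1 ≤ d) (hk : 1 ≤ k) :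
    PermDigraphAdj d k (permCycVert d k t hd hk) (permCycVert d k (t + 1) hd hk) := by
  constructor
  · intro i j hij
    apply Fin.ext
    show (t + 1 + (i : ℕ)) % (k + 1) = (t + (j : ℕ)) % (k + 1)
    congr 1
    omega
  · intro i j hij
    intro h
    have h' : (t + 1 + (i : ℕ)) % (k + 1) = (t + (j : ℕ)) % (k + 1) := congrArg Fin.val h
    have h1 : t + 1 + (i : ℕ) = t + k := by omega
    rw [h1] at h'
    have h2 : k % (k + 1) = (j : ℕ) % (k + 1) := Nat.ModEq.add_left_cancel' t h'
    have hj := j.2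
    rw [Nat.mod_eq_of_lt (by omega), Nat.mod_eq_of_lt (by omega)] at h2
    omega

lemma permCycVert_period (d k t : ℕ) (hd : 1 ≤ d) (hk : 1 ≤ k) :
    permCycVert d k (t + (k + 1)) hd hk = permCycVert d k t hd hk := by
  apply Subtype.ext
  funext i
  apply Fin.ext
  show (t + (k + 1) + (i : ℕ)) % (k + 1) = (t + (i : ℕ)) % (k + 1)
  rw [show t + (k + 1) + (i : ℕ) = (t + (i : ℕ)) + (k + 1) by omega]
  exact Nat.add_mod_right _ _

lemma permCycVert_inj (d k : ℕ) (hd : 1 ≤ d) (hk : 1 ≤ k) {t t' : ℕ}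
    (ht : t < k + 1) (ht' : t' < k + 1)
    (h : permCycVert d k t hd hk = permCycVert d k t' hd hk) : t = t' := by
  have h0 : ((permCycVert d k t hd hk).1 ⟨0, hk⟩ : ℕ)
      = ((permCycVert d k t' hd hk).1 ⟨0, hk⟩ : ℕ) := by rw [h]
  have : (t + 0) % (k + 1) = (t' + 0) % (k + 1) := h0
  simp only [Nat.add_zero] at this
  rw [Nat.mod_eq_of_lt ht, Nat.mod_eq_of_lt ht'] at this
  exact this

/-- P(d,k) contains a directed cycle of length `k+1`, and hence its geodetic
girth is exactly `k`: it is `k`-geodetic but not `(k+1)`-geodetic. -/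
theorem permDigraph_geodetic_girth (d k : ℕ) (hd : 2 ≤ d) (hk : 2 ≤ k) :
    (∃ (u : PermDigraphVertex d k) (l : List (PermDigraphVertex d k)),
      l.head? = some u ∧ l.getLast? = some u ∧ l.Chain' (PermDigraphAdj d k) ∧
      l.length = k + 2 ∧ l.dropLast.Nodup) ∧
    PermDigraphGeodetic d k k ∧ ¬ PermDigraphGeodetic d k (k + 1) := by
  have hd1 : 1 ≤ d := by omega
  have hk1 : 1 ≤ k := by omega
  set f : ℕ → PermDigraphVertex d k := fun t => permCycVert d k t hd1 hk1 with hf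
  set L : List (PermDigraphVertex d k) := (List.range (k + 2)).map f with hL
  have hLlen : L.length = k + 2 := by simp [hL]
  have hLget : ∀ (s : ℕ) (hs : s < L.length), L.get ⟨s, hs⟩ = f s := by
    intro s hs
    simp [hL, List.get_eq_getElem]
  have hne : L ≠ [] := by
    intro h; rw [h] at hLlen; simp at hLlen
  have hhead : L.head? = some (f 0) := by
    rw [List.head?_eq_head hne, List.head_eq_getElem_zero hne]
    have := hLget 0 (by omega)
    rw [List.get_eq_getElem] at this
    rw [this]
  have hlast : L.getLast? = some (f 0) := by
    rw [List.getLast?_eq_getLast_of_ne_nil hne, List.getLast_eq_getElem]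
    have := hLget (L.length - 1) (by omega)
    rw [List.get_eq_getElem] at this
    rw [this]
    have : f (L.length - 1) = f 0 := by
      rw [hLlen]
      show permCycVert d k (k + 2 - 1) hd1 hk1 = permCycVert d k 0 hd1 hk1
      rw [show k + 2 - 1 = 0 + (k + 1) by omega]
      exact permCycVert_period d k 0 hd1 hk1
    rw [this]
  have hchain : L.Chain' (PermDigraphAdj d k) := by
    refine List.isChain_iff_getElem.mpr ?_
    intro i hi
    have e1 := hLget i (by omega)
    have e2 := hLget (i + 1) (by omega)
    rw [List.get_eq_getElem] at e1 e2
    rw [e1, e2]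
    exact permCycAdj d k i hd1 hk1
  have hnodup : L.dropLast.Nodup := by
    have h1 : L.dropLast = (List.range (k + 1)).map f := by
      rw [hL, ← List.map_dropLast]
      congr 1
      rw [List.range_succ, List.dropLast_concat]
    rw [h1]
    apply List.Nodup.map_on _ List.nodup_range
    intro t ht t' ht' hft
    rw [List.mem_range] at ht ht'
    exact permCycVert_inj d k hd1 hk1 ht ht' hft
  refine ⟨⟨f 0, L, hhead, hlast, hchain, hLlen, hnodup⟩, ?_, ?_⟩
  · -- k-geodetic
    intro u v l₁ l₂ h₁ h₂
    have hk0 : 0 < k := by omega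
    rcases lt_trichotomy l₁.length l₂.length with hlt | heq | hgt
    · exact absurd (permWalk_length_lt_false hk0 u v l₁ l₂ h₁ h₂ hlt) not_false
    · obtain ⟨hh₁, hl₁, hc₁, hn₁⟩ := h₁
      obtain ⟨hh₂, hl₂, hc₂, hn₂⟩ := h₂
      have hne₁ : l₁ ≠ [] := by intro h; subst h; simp at hh₁
      have hne₂ : l₂ ≠ [] := by intro h; subst h; simp at hh₂
      have hu₁ : l₁.head hne₁ = u := by
        rw [List.head?_eq_head hne₁] at hh₁; exact Option.some.inj hh₁
      have hv₁ : l₁.getLast hne₁ = v := by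
        rw [List.getLast?_eq_getLast_of_ne_nil hne₁] at hl₁; exact Option.some.inj hl₁
      have hu₂ : l₂.head hne₂ = u := by
        rw [List.head?_eq_head hne₂] at hh₂; exact Option.some.inj hh₂
      have hv₂ : l₂.getLast hne₂ = v := by
        rw [List.getLast?_eq_getLast_of_ne_nil hne₂] at hl₂; exact Option.some.inj hl₂
      apply List.ext_getElem heq
      intro s hs₁ hs₂
      have e₁ := permWalk_determined u v l₁ hc₁ hne₁ hu₁ hv₁ hn₁ s hs₁
      have e₂ := permWalk_determined u v l₂ hc₂ hne₂ hu₂ hv₂ hn₂ s hs₂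
      simp only [List.get_eq_getElem] at e₁ e₂
      apply Subtype.ext
      funext i
      rw [e₁ i, e₂ i]
      simp only [heq]
    · exact absurd (permWalk_length_lt_false hk0 u v l₂ l₁ h₂ h₁ hgt) not_false
  · -- not (k+1)-geodetic
    intro hgeo
    have hw₁ : PermDigraphWalkUpTo d k (k + 1) (f 0) (f 0) [f 0] := by
      refine ⟨rfl, rfl, List.isChain_singleton _, by simp⟩
    have hw₂ : PermDigraphWalkUpTo d k (k + 1) (f 0) (f 0) L :=
      ⟨hhead, hlast, hchain, by omega⟩
    have := hgeo (f 0) (f 0) [f 0] L hw₁ hw₂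
    have hlen := congrArg List.length this
    rw [hLlen] at hlen
    simp only [List.length_singleton] at hlen
    omega
end
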